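/- arXiv:2411.00790 — 5 statements merged into one kernel-verified Lean document; each statement's English description precedes it below -/
import Mathlib

section
/- Product entropic uncertainty principle (finite case): Let {τ_j}_{j=1}^n and {ω_k}_{k=1}^m be Parseval frames for a finite-dimensional Hilbert space H with ‖τ_j‖ ≤ 1 and ‖ω_k‖ ≤ 1 for all j, k. Let φ : (0,1] → (0,∞) be continuous, decreasing, and submultiplicative (φ(xy) ≤ φ(x)φ(y) for all x, y ∈ (0,1]). Then for every unit vector h with ⟨h, τ_j⟩ ≠ 0 and ⟨h, ω_k⟩ ≠ 0 for all j, k, the product S_{τ,φ}(h) · S_{ω,φ}(h) ≥ φ(((1 + max_{j,k} |⟨τ_j, ω_k⟩|)²)/4) ≥ 0, where S_{τ,φ}(h) = Σ_j |⟨h, τ_j⟩|² φ(|⟨h, τ_j⟩|²) and S_{ω,φ}(h) = Σ_k |⟨h, ω_k⟩|² φ(|⟨h, ω_k⟩|²). -/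
open RCLike

lemma key_ineq {𝕜 H : Type*} [RCLike 𝕜] [NormedAddCommGroup H] [InnerProductSpace 𝕜 H]
    (h u v : H) (hh : ‖h‖ = 1) (hu : ‖u‖ ≤ 1) (hv : ‖v‖ ≤ 1)
    (hc : (inner 𝕜 h u : 𝕜) ≠ 0) :
    ‖(inner 𝕜 h u : 𝕜)‖ ^ 2 + ‖(inner 𝕜 h v : 𝕜)‖ ^ 2 ≤ 1 + ‖(inner 𝕜 u v : 𝕜)‖ := by
  set c : 𝕜 := inner 𝕜 h u with hc'
  set d : 𝕜 := inner 𝕜 h v with hd'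
  set w : H := (starRingEnd 𝕜) c • u + (starRingEnd 𝕜) d • v with hw
  set s : ℝ := ‖c‖ ^ 2 + ‖d‖ ^ 2 with hs
  have hcpos : 0 < ‖c‖ := norm_pos_iff.mpr hc
  have hspos : 0 < s := by
    have h2 : (0:ℝ) ≤ ‖d‖ ^ 2 := by positivity
    nlinarith
  have h1 : (inner 𝕜 h w : 𝕜) = ((s : ℝ) : 𝕜) := by
    rw [hw, inner_add_right, inner_smul_right, inner_smul_right, ← hc', ← hd',
      RCLike.conj_mul, RCLike.conj_mul, hs]
    push_cast
    ring
  have hsw : s ≤ ‖w‖ := by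
    have h2 := norm_inner_le_norm (𝕜 := 𝕜) h w
    rw [h1, hh, one_mul] at h2
    rwa [RCLike.norm_ofReal, abs_of_pos hspos] at h2
  have hnu : ‖(starRingEnd 𝕜) c • u‖ ≤ ‖c‖ := by
    rw [norm_smul, RCLike.norm_conj]
    calc ‖c‖ * ‖u‖ ≤ ‖c‖ * 1 := mul_le_mul_of_nonneg_left hu (norm_nonneg _)
      _ = ‖c‖ := mul_one _
  have hnv : ‖(starRingEnd 𝕜) d • v‖ ≤ ‖d‖ := by
    rw [norm_smul, RCLike.norm_conj]
    calc ‖d‖ * ‖v‖ ≤ ‖d‖ * 1 := mul_le_mul_of_nonneg_left hv (norm_nonneg _)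
      _ = ‖d‖ := mul_one _
  have hre : re (inner 𝕜 ((starRingEnd 𝕜) c • u) ((starRingEnd 𝕜) d • v) : 𝕜)
      ≤ ‖c‖ * ‖d‖ * ‖(inner 𝕜 u v : 𝕜)‖ := by
    rw [inner_smul_left, inner_smul_right, starRingEnd_self_apply]
    calc re (c * ((starRingEnd 𝕜) d * (inner 𝕜 u v : 𝕜)))
        ≤ ‖c * ((starRingEnd 𝕜) d * (inner 𝕜 u v : 𝕜))‖ := RCLike.re_le_norm _
      _ = ‖c‖ * ‖d‖ * ‖(inner 𝕜 u v : 𝕜)‖ := by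
          rw [norm_mul, norm_mul, RCLike.norm_conj]; ring
  have hw2 : ‖w‖ ^ 2 ≤ s * (1 + ‖(inner 𝕜 u v : 𝕜)‖) := by
    have h3 := norm_add_sq (𝕜 := 𝕜) ((starRingEnd 𝕜) c • u) ((starRingEnd 𝕜) d • v)
    rw [← hw] at h3
    have h4 : ‖(starRingEnd 𝕜) c • u‖ ^ 2 ≤ ‖c‖ ^ 2 :=
      pow_le_pow_left₀ (norm_nonneg _) hnu 2
    have h5 : ‖(starRingEnd 𝕜) d • v‖ ^ 2 ≤ ‖d‖ ^ 2 :=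
      pow_le_pow_left₀ (norm_nonneg _) hnv 2
    have h6 : 2 * ‖c‖ * ‖d‖ ≤ ‖c‖ ^ 2 + ‖d‖ ^ 2 := two_mul_le_add_sq _ _
    nlinarith [norm_nonneg (inner 𝕜 u v : 𝕜)]
  have hsq : s ^ 2 ≤ s * (1 + ‖(inner 𝕜 u v : 𝕜)‖) :=
    le_trans (pow_le_pow_left₀ (le_of_lt hspos) hsw 2) hw2
  have := le_of_mul_le_mul_left (by nlinarith : s * s ≤ s * (1 + ‖(inner 𝕜 u v : 𝕜)‖)) hspos
  linarith [this]

theorem product_entropic_uncertainty {𝕜 H : Type*} [RCLike 𝕜] [NormedAddCommGroup H]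
    [InnerProductSpace 𝕜 H] [FiniteDimensional 𝕜 H]
    {n m : ℕ} (hn : 0 < n) (hm : 0 < m)
    (τ : Fin n → H) (ω : Fin m → H)
    (hτ : ∀ x : H, ‖x‖ ^ 2 = ∑ j, ‖(inner 𝕜 x (τ j) : 𝕜)‖ ^ 2)
    (hω : ∀ x : H, ‖x‖ ^ 2 = ∑ k, ‖(inner 𝕜 x (ω k) : 𝕜)‖ ^ 2)
    (hτ1 : ∀ j, ‖τ j‖ ≤ 1) (hω1 : ∀ k, ‖ω k‖ ≤ 1)
    (φ : ℝ → ℝ)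
    (hφc : ContinuousOn φ (Set.Ioc 0 1))
    (hφpos : ∀ x ∈ Set.Ioc (0:ℝ) 1, 0 < φ x)
    (hφdec : ∀ x ∈ Set.Ioc (0:ℝ) 1, ∀ y ∈ Set.Ioc (0:ℝ) 1, x ≤ y → φ y ≤ φ x)
    (hφsub : ∀ x ∈ Set.Ioc (0:ℝ) 1, ∀ y ∈ Set.Ioc (0:ℝ) 1, φ (x * y) ≤ φ x * φ y)
    (h : H) (hh : ‖h‖ = 1)
    (hhτ : ∀ j, (inner 𝕜 h (τ j) : 𝕜) ≠ 0) (hhω : ∀ k, (inner 𝕜 h (ω k) : 𝕜) ≠ 0) :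
    (∑ j, ‖(inner 𝕜 h (τ j) : 𝕜)‖ ^ 2 * φ (‖(inner 𝕜 h (τ j) : 𝕜)‖ ^ 2)) *
      (∑ k, ‖(inner 𝕜 h (ω k) : 𝕜)‖ ^ 2 * φ (‖(inner 𝕜 h (ω k) : 𝕜)‖ ^ 2)) ≥
      φ ((1 + ⨆ j, ⨆ k, ‖(inner 𝕜 (τ j) (ω k) : 𝕜)‖) ^ 2 / 4) ∧
    φ ((1 + ⨆ j, ⨆ k, ‖(inner 𝕜 (τ j) (ω k) : 𝕜)‖) ^ 2 / 4) ≥ 0 := by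
  set a : Fin n → ℝ := fun j => ‖(inner 𝕜 h (τ j) : 𝕜)‖ ^ 2 with ha
  set b : Fin m → ℝ := fun k => ‖(inner 𝕜 h (ω k) : 𝕜)‖ ^ 2 with hb
  set M : ℝ := ⨆ j, ⨆ k, ‖(inner 𝕜 (τ j) (ω k) : 𝕜)‖ with hM
  have suma : ∑ j, a j = 1 := by
    have := (hτ h).symm
    rwa [hh, one_pow] at this
  have sumb : ∑ k, b k = 1 := by
    have := (hω h).symm
    rwa [hh, one_pow] at this
  have apos : ∀ j, 0 < a j := fun j => by
    have := norm_pos_iff.mpr (hhτ j); positivity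
  have bpos : ∀ k, 0 < b k := fun k => by
    have := norm_pos_iff.mpr (hhω k); positivity
  have amem : ∀ j, a j ∈ Set.Ioc (0:ℝ) 1 := fun j => by
    refine ⟨apos j, ?_⟩
    rw [← suma]
    exact Finset.single_le_sum (fun i _ => (apos i).le) (Finset.mem_univ j)
  have bmem : ∀ k, b k ∈ Set.Ioc (0:ℝ) 1 := fun k => by
    refine ⟨bpos k, ?_⟩
    rw [← sumb]
    exact Finset.single_le_sum (fun i _ => (bpos i).le) (Finset.mem_univ k)
  obtain ⟨j₀, -, hj₀⟩ := Finset.exists_max_image Finset.univ a ⟨⟨0, hn⟩, Finset.mem_univ _⟩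
  obtain ⟨k₀, -, hk₀⟩ := Finset.exists_max_image Finset.univ b ⟨⟨0, hm⟩, Finset.mem_univ _⟩
  -- entropy lower bounds
  have hSτ : φ (a j₀) ≤ ∑ j, a j * φ (a j) := by
    calc φ (a j₀) = (∑ j, a j) * φ (a j₀) := by rw [suma, one_mul]
      _ = ∑ j, a j * φ (a j₀) := Finset.sum_mul ..
      _ ≤ ∑ j, a j * φ (a j) := Finset.sum_le_sum fun j _ =>
          mul_le_mul_of_nonneg_left
            (hφdec _ (amem j) _ (amem j₀) (hj₀ j (Finset.mem_univ j))) (apos j).le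
  have hSω : φ (b k₀) ≤ ∑ k, b k * φ (b k) := by
    calc φ (b k₀) = (∑ k, b k) * φ (b k₀) := by rw [sumb, one_mul]
      _ = ∑ k, b k * φ (b k₀) := Finset.sum_mul ..
      _ ≤ ∑ k, b k * φ (b k) := Finset.sum_le_sum fun k _ =>
          mul_le_mul_of_nonneg_left
            (hφdec _ (bmem k) _ (bmem k₀) (hk₀ k (Finset.mem_univ k))) (bpos k).le
  -- bounds on M
  have hMk : ∀ j k, ‖(inner 𝕜 (τ j) (ω k) : 𝕜)‖ ≤ M := by
    intro j k
    have h1 : ‖(inner 𝕜 (τ j) (ω k) : 𝕜)‖ ≤ ⨆ k', ‖(inner 𝕜 (τ j) (ω k') : 𝕜)‖ :=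
      le_ciSup (f := fun k' => ‖(inner 𝕜 (τ j) (ω k') : 𝕜)‖)
        (Set.Finite.bddAbove (Set.finite_range _)) k
    exact h1.trans (le_ciSup (f := fun j' => ⨆ k', ‖(inner 𝕜 (τ j') (ω k') : 𝕜)‖)
        (Set.Finite.bddAbove (Set.finite_range _)) j)
  have hM0 : 0 ≤ M := le_trans (norm_nonneg _) (hMk j₀ k₀)
  have hM1 : M ≤ 1 := by
    haveI : Nonempty (Fin n) := ⟨⟨0, hn⟩⟩
    haveI : Nonempty (Fin m) := ⟨⟨0, hm⟩⟩
    refine ciSup_le fun j => ciSup_le fun k => ?_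
    calc ‖(inner 𝕜 (τ j) (ω k) : 𝕜)‖ ≤ ‖τ j‖ * ‖ω k‖ := norm_inner_le_norm _ _
      _ ≤ 1 * 1 := mul_le_mul (hτ1 j) (hω1 k) (norm_nonneg _) zero_le_one
      _ = 1 := mul_one 1
  have hCmem : (1 + M) ^ 2 / 4 ∈ Set.Ioc (0:ℝ) 1 := by
    constructor
    · positivity
    · nlinarith
  -- key inequality: a j₀ * b k₀ ≤ (1+M)^2/4
  have hkey : a j₀ * b k₀ ≤ (1 + M) ^ 2 / 4 := by
    have h1 := key_ineq (𝕜 := 𝕜) h (τ j₀) (ω k₀) hh (hτ1 j₀) (hω1 k₀) (hhτ j₀)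
    have h2 := hMk j₀ k₀
    have h3 : 2 * ‖(inner 𝕜 h (τ j₀) : 𝕜)‖ * ‖(inner 𝕜 h (ω k₀) : 𝕜)‖ ≤ a j₀ + b k₀ :=
      two_mul_le_add_sq _ _
    have h4 : ‖(inner 𝕜 h (τ j₀) : 𝕜)‖ * ‖(inner 𝕜 h (ω k₀) : 𝕜)‖ ≤ (1 + M) / 2 := by
      simp only [ha, hb] at h1 h3 ⊢
      linarith
    have h5 : a j₀ * b k₀ = (‖(inner 𝕜 h (τ j₀) : 𝕜)‖ * ‖(inner 𝕜 h (ω k₀) : 𝕜)‖) ^ 2 := by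
      simp only [ha, hb]; ring
    rw [h5]
    calc (‖(inner 𝕜 h (τ j₀) : 𝕜)‖ * ‖(inner 𝕜 h (ω k₀) : 𝕜)‖) ^ 2 ≤ ((1 + M) / 2) ^ 2 :=
          pow_le_pow_left₀ (by positivity) h4 2
      _ = (1 + M) ^ 2 / 4 := by ring
  have habmem : a j₀ * b k₀ ∈ Set.Ioc (0:ℝ) 1 := by
    constructor
    · exact mul_pos (apos j₀) (bpos k₀)
    · exact mul_le_one₀ (amem j₀).2 (bpos k₀).le (bmem k₀).2
  constructor
  · calc φ ((1 + M) ^ 2 / 4) ≤ φ (a j₀ * b k₀) :=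
          hφdec _ habmem _ hCmem hkey
      _ ≤ φ (a j₀) * φ (b k₀) := hφsub _ (amem j₀) _ (bmem k₀)
      _ ≤ (∑ j, a j * φ (a j)) * (∑ k, b k * φ (b k)) :=
          mul_le_mul hSτ hSω (hφpos _ (bmem k₀)).le
            (le_trans (hφpos _ (amem j₀)).le hSτ)
  · exact (hφpos _ hCmem).le
end

section
/- For two 1-bounded Parseval frames {τ_j}_{j=1}^n and {ω_k}_{k=1}^m of a finite-dimensional Hilbert space H, and any unit vector h, one has for all j, k: |⟨h, τ_j⟩|² |⟨h, ω_k⟩|² ≤ ((1 + max_{j',k'} |⟨τ_{j'}, ω_{k'}⟩|)²)/4. -/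
lemma buzano_aux {𝕜 H : Type*} [RCLike 𝕜] [NormedAddCommGroup H]
    [InnerProductSpace 𝕜 H] (u v h : H) (hh : ‖h‖ = 1) :
    ‖(inner 𝕜 u h : 𝕜)‖ * ‖(inner 𝕜 h v : 𝕜)‖ ≤ (‖u‖ * ‖v‖ + ‖(inner 𝕜 u v : 𝕜)‖) / 2 := by
  set a : H := ((2 : 𝕜) * (inner 𝕜 h v : 𝕜)) • h with ha
  have key : (2 : 𝕜) * inner 𝕜 u h * inner 𝕜 h v = inner 𝕜 u (a - v) + inner 𝕜 u v := by
    simp [ha, inner_sub_right, inner_smul_right]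
    ring
  have hnormsq : ‖a - v‖ ^ 2 = ‖v‖ ^ 2 := by
    have := @norm_sub_sq 𝕜 H _ _ _ a v
    have h1 : ‖a‖ = 2 * ‖(inner 𝕜 h v : 𝕜)‖ := by
      simp [ha, norm_smul, hh]
    have hav : (inner 𝕜 a v : 𝕜) = 2 * ((‖(inner 𝕜 h v : 𝕜)‖ ^ 2 : ℝ) : 𝕜) := by
      rw [ha, inner_smul_left, map_mul, mul_assoc, RCLike.conj_mul]
      norm_num
      left
      exact map_ofNat _ 2
    have h2 : RCLike.re (inner 𝕜 a v : 𝕜) = 2 * ‖(inner 𝕜 h v : 𝕜)‖ ^ 2 := by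
      rw [hav]
      simp [← map_pow]
    rw [this, h1, h2]
    ring
  have hnorm : ‖a - v‖ = ‖v‖ := by
    nlinarith [norm_nonneg (a - v), norm_nonneg v, hnormsq]
  have hb : ‖(inner 𝕜 u (a - v) : 𝕜) + inner 𝕜 u v‖ ≤ ‖u‖ * ‖v‖ + ‖(inner 𝕜 u v : 𝕜)‖ := by
    calc ‖(inner 𝕜 u (a - v) : 𝕜) + inner 𝕜 u v‖ ≤ ‖(inner 𝕜 u (a - v) : 𝕜)‖ + ‖(inner 𝕜 u v : 𝕜)‖ :=
          norm_add_le _ _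
      _ ≤ ‖u‖ * ‖a - v‖ + ‖(inner 𝕜 u v : 𝕜)‖ := by
          gcongr; exact norm_inner_le_norm u (a - v)
      _ = ‖u‖ * ‖v‖ + ‖(inner 𝕜 u v : 𝕜)‖ := by rw [hnorm]
  have : ‖((2 : 𝕜) * inner 𝕜 u h * inner 𝕜 h v : 𝕜)‖ ≤ ‖u‖ * ‖v‖ + ‖(inner 𝕜 u v : 𝕜)‖ := by
    rw [key]; exact hb
  rw [norm_mul, norm_mul] at this
  simp at this
  linarith

theorem coeff_product_bound {𝕜 H : Type*} [RCLike 𝕜] [NormedAddCommGroup H]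
    [InnerProductSpace 𝕜 H] [FiniteDimensional 𝕜 H]
    {n m : ℕ} (hn : 0 < n) (hm : 0 < m)
    (τ : Fin n → H) (ω : Fin m → H)
    (hτ : ∀ x : H, ‖x‖ ^ 2 = ∑ j, ‖(inner 𝕜 x (τ j) : 𝕜)‖ ^ 2)
    (hω : ∀ x : H, ‖x‖ ^ 2 = ∑ k, ‖(inner 𝕜 x (ω k) : 𝕜)‖ ^ 2)
    (hτ1 : ∀ j, ‖τ j‖ ≤ 1) (hω1 : ∀ k, ‖ω k‖ ≤ 1)
    (h : H) (hh : ‖h‖ = 1) (j : Fin n) (k : Fin m) :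
    ‖(inner 𝕜 h (τ j) : 𝕜)‖ ^ 2 * ‖(inner 𝕜 h (ω k) : 𝕜)‖ ^ 2 ≤
      (1 + ⨆ j', ⨆ k', ‖(inner 𝕜 (τ j') (ω k') : 𝕜)‖) ^ 2 / 4 := by
  haveI : Nonempty (Fin n) := ⟨⟨0, hn⟩⟩
  haveI : Nonempty (Fin m) := ⟨⟨0, hm⟩⟩
  set M : ℝ := ⨆ j', ⨆ k', ‖(inner 𝕜 (τ j') (ω k') : 𝕜)‖ with hM
  have hMle : ‖(inner 𝕜 (τ j) (ω k) : 𝕜)‖ ≤ M := by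
    have h1 : ‖(inner 𝕜 (τ j) (ω k) : 𝕜)‖ ≤ ⨆ k', ‖(inner 𝕜 (τ j) (ω k') : 𝕜)‖ := by
      apply le_ciSup (Set.Finite.bddAbove (Set.finite_range
        (fun k' => ‖(inner 𝕜 (τ j) (ω k') : 𝕜)‖)))
    refine h1.trans ?_
    apply le_ciSup (Set.Finite.bddAbove (Set.finite_range
      (fun j' => ⨆ k', ‖(inner 𝕜 (τ j') (ω k') : 𝕜)‖)))
  have hM0 : 0 ≤ M := (norm_nonneg _).trans hMle
  have hbuz := buzano_aux (𝕜 := 𝕜) (τ j) (ω k) h hh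
  have e1 : ‖(inner 𝕜 (τ j) h : 𝕜)‖ = ‖(inner 𝕜 h (τ j) : 𝕜)‖ := by
    exact norm_inner_symm _ _
  have hbound : ‖(inner 𝕜 h (τ j) : 𝕜)‖ * ‖(inner 𝕜 h (ω k) : 𝕜)‖ ≤ (1 + M) / 2 := by
    rw [← e1]
    refine hbuz.trans ?_
    have : ‖τ j‖ * ‖ω k‖ ≤ 1 := by
      calc ‖τ j‖ * ‖ω k‖ ≤ 1 * 1 := by
            apply mul_le_mul (hτ1 j) (hω1 k) (norm_nonneg _) zero_le_one
        _ = 1 := one_mul 1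
    linarith
  have h0 : 0 ≤ ‖(inner 𝕜 h (τ j) : 𝕜)‖ * ‖(inner 𝕜 h (ω k) : 𝕜)‖ := by positivity
  have hsq := pow_le_pow_left₀ h0 hbound 2
  calc ‖(inner 𝕜 h (τ j) : 𝕜)‖ ^ 2 * ‖(inner 𝕜 h (ω k) : 𝕜)‖ ^ 2
      = (‖(inner 𝕜 h (τ j) : 𝕜)‖ * ‖(inner 𝕜 h (ω k) : 𝕜)‖) ^ 2 := by ring
    _ ≤ ((1 + M) / 2) ^ 2 := hsq
    _ = (1 + M) ^ 2 / 4 := by ring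
end

section
/- The function φ(x) = x^{-p} for fixed p > 0 on (0,1] is continuous, decreasing, submultiplicative (in fact φ(xy) = φ(x)φ(y)), and takes values in (0,∞); hence for two 1-bounded Parseval frames {τ_j}_{j=1}^n, {ω_k}_{k=1}^m of a finite-dimensional Hilbert space H and any unit vector h with all frame coefficients nonzero, (Σ_j |⟨h,τ_j⟩|^{2(1-p)}) · (Σ_k |⟨h,ω_k⟩|^{2(1-p)}) ≥ (4/(1 + max_{j,k}|⟨τ_j,ω_k⟩|)²)^p. -/
open scoped RealInnerProductSpace

/-- Key local uncertainty: for a unit vector `h` and vectors of norm at most 1,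
`|⟨h,τ⟩|² + |⟨h,ω⟩|² ≤ 1 + |⟨τ,ω⟩|`. -/
lemma key_local_bound {𝕜 H : Type*} [RCLike 𝕜] [NormedAddCommGroup H]
    [InnerProductSpace 𝕜 H] (h τ ω : H) (hh : ‖h‖ = 1) (hτ : ‖τ‖ ≤ 1) (hω : ‖ω‖ ≤ 1)
    (ha : (inner 𝕜 h τ : 𝕜) ≠ 0) :
    ‖(inner 𝕜 h τ : 𝕜)‖ ^ 2 + ‖(inner 𝕜 h ω : 𝕜)‖ ^ 2 ≤ 1 + ‖(inner 𝕜 τ ω : 𝕜)‖ := by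
  set a : 𝕜 := inner 𝕜 h τ with haa
  set b : 𝕜 := inner 𝕜 h ω with hbb
  set s : ℝ := ‖a‖ ^ 2 + ‖b‖ ^ 2 with hs
  set v : H := (starRingEnd 𝕜 a) • τ + (starRingEnd 𝕜 b) • ω with hv
  have hτ0 : (0:ℝ) ≤ ‖τ‖ := norm_nonneg _
  have hω0 : (0:ℝ) ≤ ‖ω‖ := norm_nonneg _
  have h1 : (inner 𝕜 h v : 𝕜) = (s : ℝ) := by
    rw [hv, inner_add_right, inner_smul_right, inner_smul_right, ← haa, ← hbb,
      RCLike.conj_mul, RCLike.conj_mul, hs]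
    push_cast
    ring
  have hspos : 0 < s := by
    have hA0 : 0 < ‖a‖ := norm_pos_iff.mpr ha
    nlinarith [sq_nonneg ‖b‖]
  have hsle : s ≤ ‖v‖ := by
    have h2 : ‖(inner 𝕜 h v : 𝕜)‖ ≤ ‖h‖ * ‖v‖ := norm_inner_le_norm h v
    rw [h1, hh, one_mul] at h2
    rwa [RCLike.norm_ofReal, abs_of_nonneg hspos.le] at h2
  have hvsq : ‖v‖ ^ 2 ≤ s * (1 + ‖(inner 𝕜 τ ω : 𝕜)‖) := by
    have hns : ‖v‖ ^ 2 = ‖(starRingEnd 𝕜 a) • τ‖ ^ 2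
        + 2 * RCLike.re (inner 𝕜 ((starRingEnd 𝕜 a) • τ) ((starRingEnd 𝕜 b) • ω) : 𝕜)
        + ‖(starRingEnd 𝕜 b) • ω‖ ^ 2 := norm_add_sq _ _
    have h3 : ‖(starRingEnd 𝕜 a) • τ‖ ^ 2 ≤ ‖a‖ ^ 2 := by
      rw [norm_smul, mul_pow, RCLike.norm_conj]
      have hτ2 : ‖τ‖ ^ 2 ≤ 1 := by nlinarith
      nlinarith [sq_nonneg ‖a‖]
    have h4 : ‖(starRingEnd 𝕜 b) • ω‖ ^ 2 ≤ ‖b‖ ^ 2 := by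
      rw [norm_smul, mul_pow, RCLike.norm_conj]
      have hω2 : ‖ω‖ ^ 2 ≤ 1 := by nlinarith
      nlinarith [sq_nonneg ‖b‖]
    have h5 : RCLike.re (inner 𝕜 ((starRingEnd 𝕜 a) • τ) ((starRingEnd 𝕜 b) • ω) : 𝕜)
        ≤ ‖a‖ * ‖b‖ * ‖(inner 𝕜 τ ω : 𝕜)‖ := by
      calc RCLike.re (inner 𝕜 ((starRingEnd 𝕜 a) • τ) ((starRingEnd 𝕜 b) • ω) : 𝕜)
          ≤ ‖(inner 𝕜 ((starRingEnd 𝕜 a) • τ) ((starRingEnd 𝕜 b) • ω) : 𝕜)‖ :=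
            RCLike.re_le_norm _
        _ = ‖a‖ * ‖b‖ * ‖(inner 𝕜 τ ω : 𝕜)‖ := by
            rw [inner_smul_left, inner_smul_right]
            simp [norm_mul, RCLike.norm_conj]
            ring
    have h6 : 2 * (‖a‖ * ‖b‖) ≤ s := by nlinarith [sq_nonneg (‖a‖ - ‖b‖)]
    have h7 : (0:ℝ) ≤ ‖(inner 𝕜 τ ω : 𝕜)‖ := norm_nonneg _
    nlinarith
  have hssq : s ^ 2 ≤ ‖v‖ ^ 2 := by nlinarith [norm_nonneg v]
  have : s ^ 2 ≤ s * (1 + ‖(inner 𝕜 τ ω : 𝕜)‖) := hssq.trans hvsq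
  nlinarith

lemma sum_rpow_lower {n : ℕ} (c : Fin n → ℝ) (p t : ℝ) (hp : 0 < p) (_ht : 0 < t)
    (hc : ∀ j, 0 < c j) (hct : ∀ j, c j ≤ t) (hsum : ∑ j, c j ^ 2 = 1) :
    t ^ (-(2 * p)) ≤ ∑ j, c j ^ (2 * (1 - p)) := by
  have key : ∀ j, c j ^ 2 * t ^ (-(2 * p)) ≤ c j ^ (2 * (1 - p)) := by
    intro j
    have h1 : c j ^ (2 * (1 - p)) = c j ^ (2:ℝ) * c j ^ (-(2 * p)) := by
      rw [← Real.rpow_add (hc j)]; ring_nf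
    rw [h1, Real.rpow_two]
    have h2 : t ^ (-(2 * p)) ≤ c j ^ (-(2 * p)) :=
      Real.rpow_le_rpow_of_nonpos (hc j) (hct j) (by nlinarith)
    have : (0:ℝ) ≤ c j ^ 2 := sq_nonneg _
    nlinarith
  calc t ^ (-(2 * p)) = (∑ j, c j ^ 2) * t ^ (-(2 * p)) := by rw [hsum, one_mul]
    _ = ∑ j, c j ^ 2 * t ^ (-(2 * p)) := by rw [Finset.sum_mul]
    _ ≤ ∑ j, c j ^ (2 * (1 - p)) := Finset.sum_le_sum fun j _ => key j

theorem power_function_product_uncertainty {𝕜 H : Type*} [RCLike 𝕜] [NormedAddCommGroup H]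
    [InnerProductSpace 𝕜 H] [FiniteDimensional 𝕜 H]
    {p : ℝ} (hp : 0 < p)
    {n m : ℕ} (hn : 0 < n) (hm : 0 < m)
    (τ : Fin n → H) (ω : Fin m → H)
    (hτ : ∀ x : H, ‖x‖ ^ 2 = ∑ j, ‖(inner 𝕜 x (τ j) : 𝕜)‖ ^ 2)
    (hω : ∀ x : H, ‖x‖ ^ 2 = ∑ k, ‖(inner 𝕜 x (ω k) : 𝕜)‖ ^ 2)
    (hτ1 : ∀ j, ‖τ j‖ ≤ 1) (hω1 : ∀ k, ‖ω k‖ ≤ 1)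
    (h : H) (hh : ‖h‖ = 1)
    (hhτ : ∀ j, (inner 𝕜 h (τ j) : 𝕜) ≠ 0) (hhω : ∀ k, (inner 𝕜 h (ω k) : 𝕜) ≠ 0) :
    (ContinuousOn (fun x : ℝ => x ^ (-p)) (Set.Ioc 0 1) ∧
      (∀ x ∈ Set.Ioc (0:ℝ) 1, ∀ y ∈ Set.Ioc (0:ℝ) 1, x ≤ y → y ^ (-p) ≤ x ^ (-p)) ∧
      (∀ x ∈ Set.Ioc (0:ℝ) 1, ∀ y ∈ Set.Ioc (0:ℝ) 1, (x * y) ^ (-p) = x ^ (-p) * y ^ (-p)) ∧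
      (∀ x ∈ Set.Ioc (0:ℝ) 1, 0 < x ^ (-p))) ∧
    (∑ j, ‖(inner 𝕜 h (τ j) : 𝕜)‖ ^ (2 * (1 - p))) *
      (∑ k, ‖(inner 𝕜 h (ω k) : 𝕜)‖ ^ (2 * (1 - p))) ≥
      (4 / (1 + ⨆ j, ⨆ k, ‖(inner 𝕜 (τ j) (ω k) : 𝕜)‖) ^ 2) ^ p := by
  haveI : Nonempty (Fin n) := ⟨⟨0, hn⟩⟩
  haveI : Nonempty (Fin m) := ⟨⟨0, hm⟩⟩
  refine ⟨⟨?_, ?_, ?_, ?_⟩, ?_⟩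
  · intro x hx
    exact (Real.continuousAt_rpow_const x (-p) (Or.inl hx.1.ne')).continuousWithinAt
  · intro x hx y hy hxy
    exact Real.rpow_le_rpow_of_nonpos hx.1 hxy (by linarith)
  · intro x hx y hy
    exact Real.mul_rpow hx.1.le hy.1.le
  · intro x hx
    exact Real.rpow_pos_of_pos hx.1 _
  -- main inequality
  set c : Fin n → ℝ := fun j => ‖(inner 𝕜 h (τ j) : 𝕜)‖ with hc
  set d : Fin m → ℝ := fun k => ‖(inner 𝕜 h (ω k) : 𝕜)‖ with hd
  set ε : ℝ := ⨆ j, ⨆ k, ‖(inner 𝕜 (τ j) (ω k) : 𝕜)‖ with hε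
  obtain ⟨j₀, hj₀⟩ := Finite.exists_max c
  obtain ⟨k₀, hk₀⟩ := Finite.exists_max d
  have hcpos : ∀ j, 0 < c j := fun j => norm_pos_iff.mpr (hhτ j)
  have hdpos : ∀ k, 0 < d k := fun k => norm_pos_iff.mpr (hhω k)
  have hεge : ‖(inner 𝕜 (τ j₀) (ω k₀) : 𝕜)‖ ≤ ε := by
    have h1 : ‖(inner 𝕜 (τ j₀) (ω k₀) : 𝕜)‖ ≤ ⨆ k, ‖(inner 𝕜 (τ j₀) (ω k) : 𝕜)‖ :=
      le_ciSup (f := fun k => ‖(inner 𝕜 (τ j₀) (ω k) : 𝕜)‖)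
        (Set.Finite.bddAbove (Set.finite_range _)) k₀
    have h2 : (⨆ k, ‖(inner 𝕜 (τ j₀) (ω k) : 𝕜)‖) ≤ ε :=
      le_ciSup (Set.Finite.bddAbove (Set.finite_range _))
        (f := fun j => ⨆ k, ‖(inner 𝕜 (τ j) (ω k) : 𝕜)‖) j₀
    exact h1.trans h2
  have hε0 : 0 ≤ ε := le_trans (norm_nonneg _) hεge
  -- key bound: c j₀ * d k₀ ≤ (1 + ε) / 2
  have hkey : c j₀ * d k₀ ≤ (1 + ε) / 2 := by
    have := key_local_bound (𝕜 := 𝕜) h (τ j₀) (ω k₀) hh (hτ1 j₀) (hω1 k₀) (hhτ j₀)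
    nlinarith [sq_nonneg (c j₀ - d k₀)]
  have hsumτ : ∑ j, c j ^ 2 = 1 := by rw [hc, ← hτ h, hh, one_pow]
  have hsumω : ∑ k, d k ^ 2 = 1 := by rw [hd, ← hω h, hh, one_pow]
  have hA : (c j₀) ^ (-(2 * p)) ≤ ∑ j, c j ^ (2 * (1 - p)) :=
    sum_rpow_lower c p (c j₀) hp (hcpos j₀) hcpos hj₀ hsumτ
  have hB : (d k₀) ^ (-(2 * p)) ≤ ∑ k, d k ^ (2 * (1 - p)) :=
    sum_rpow_lower d p (d k₀) hp (hdpos k₀) hdpos hk₀ hsumω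
  have htu : 0 < c j₀ * d k₀ := mul_pos (hcpos j₀) (hdpos k₀)
  have hprod : (c j₀ * d k₀) ^ (-(2 * p))
      ≤ (∑ j, c j ^ (2 * (1 - p))) * (∑ k, d k ^ (2 * (1 - p))) := by
    rw [Real.mul_rpow (hcpos j₀).le (hdpos k₀).le]
    exact mul_le_mul hA hB (Real.rpow_nonneg (hdpos k₀).le _)
      (le_trans (Real.rpow_nonneg (hcpos j₀).le _) hA)
  have hB2 : ((1 + ε) / 2) ^ (-(2 * p)) ≤ (c j₀ * d k₀) ^ (-(2 * p)) :=
    Real.rpow_le_rpow_of_nonpos htu hkey (by nlinarith)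
  have hrw : ((1 + ε) / 2) ^ (-(2 * p)) = (4 / (1 + ε) ^ 2) ^ p := by
    have hB0 : (0:ℝ) < (1 + ε) / 2 := by linarith
    have h1 : ((1 + ε) / 2 : ℝ) ^ ((-2 : ℝ)) = 4 / (1 + ε) ^ 2 := by
      rw [Real.rpow_neg hB0.le, Real.rpow_two]
      rw [div_pow]
      rw [inv_div]
      norm_num
    have h2 : (-(2 * p)) = (-2 : ℝ) * p := by ring
    rw [h2, Real.rpow_mul hB0.le, h1]
  rw [ge_iff_le, ← hrw]
  exact hB2.trans hprod
end

section
/- Maassen–Uffink entropic uncertainty principle: Let {τ_j}_{j=1}^n and {ω_k}_{k=1}^n be two orthonormal bases of an n-dimensional Hilbert space H. Then for every unit vector h with all ⟨h, τ_j⟩ and ⟨h, ω_k⟩ nonzero, S_τ(h) + S_ω(h) ≥ -2 log(max_{j,k} |⟨τ_j, ω_k⟩|), where S_τ(h) = Σ_j |⟨h, τ_j⟩|² log(1/|⟨h, τ_j⟩|²). -/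
open Finset

noncomputable def MUphi (𝕜 : Type*) [RCLike 𝕜] : 𝕜 →+* ℂ where
  toFun x := ⟨RCLike.re x, RCLike.im x⟩
  map_one' := by simp [Complex.ext_iff]
  map_mul' x y := by simp [Complex.ext_iff, RCLike.mul_re, RCLike.mul_im]
  map_zero' := by simp [Complex.ext_iff]
  map_add' x y := by simp [Complex.ext_iff]

lemma MUphi_norm {𝕜 : Type*} [RCLike 𝕜] (x : 𝕜) : ‖MUphi 𝕜 x‖ = ‖x‖ := by
  have h1 : ‖MUphi 𝕜 x‖ ^ 2 = ‖x‖ ^ 2 := by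
    rw [Complex.sq_norm]
    show Complex.normSq ⟨RCLike.re x, RCLike.im x⟩ = _
    rw [Complex.normSq_mk, RCLike.norm_sq_eq_def]
  have := congrArg Real.sqrt h1
  rwa [Real.sqrt_sq (norm_nonneg _), Real.sqrt_sq (norm_nonneg _)] at this

lemma MUphi_conj {𝕜 : Type*} [RCLike 𝕜] (x : 𝕜) :
    MUphi 𝕜 ((starRingEnd 𝕜) x) = (starRingEnd ℂ) (MUphi 𝕜 x) := by
  simp [MUphi, Complex.ext_iff, RCLike.conj_re, RCLike.conj_im]

lemma MUunitary_l2 {n : ℕ} (V : Fin n → Fin n → ℂ)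
    (hV : ∀ j j', ∑ k, (starRingEnd ℂ) (V k j) * V k j' = if j = j' then 1 else 0)
    (g : Fin n → ℂ) :
    ∑ k, ‖∑ j, V k j * g j‖ ^ 2 = ∑ j, ‖g j‖ ^ 2 := by
  have key : (∑ k, (starRingEnd ℂ) (∑ j, V k j * g j) * (∑ j, V k j * g j))
      = ∑ j, (starRingEnd ℂ) (g j) * g j := by
    have : ∀ k, (starRingEnd ℂ) (∑ j, V k j * g j) * (∑ j, V k j * g j)
        = ∑ j, ∑ j', ((starRingEnd ℂ) (g j) * g j') * ((starRingEnd ℂ) (V k j) * V k j') := by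
      intro k
      rw [map_sum, Finset.sum_mul_sum]
      refine Finset.sum_congr rfl fun j _ => Finset.sum_congr rfl fun j' _ => ?_
      rw [map_mul]; ring
    simp_rw [this]
    rw [Finset.sum_comm]
    have : ∀ j, ∑ k, ∑ j', ((starRingEnd ℂ) (g j) * g j') * ((starRingEnd ℂ) (V k j) * V k j')
        = (starRingEnd ℂ) (g j) * g j := by
      intro j
      rw [Finset.sum_comm]
      have : ∀ j', ∑ k, ((starRingEnd ℂ) (g j) * g j') * ((starRingEnd ℂ) (V k j) * V k j')
          = ((starRingEnd ℂ) (g j) * g j') * (if j = j' then 1 else 0) := by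
        intro j'; rw [← Finset.mul_sum, hV]
      simp_rw [this]
      simp
    simp_rw [this]
  have h2 : ∀ z : ℂ, ((starRingEnd ℂ) z * z).re = ‖z‖ ^ 2 := by
    intro z
    rw [mul_comm, Complex.mul_conj]
    rw [← Complex.normSq_eq_norm_sq, Complex.ofReal_re]
  have := congrArg Complex.re key
  rw [Complex.re_sum, Complex.re_sum] at this
  simp_rw [h2] at this
  exact this

lemma MUinterp {n : ℕ} (hn : 0 < n) (V : Fin n → Fin n → ℂ) {c : ℝ} (hc : 0 < c)
    (hVc : ∀ k j, ‖V k j‖ ≤ c)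
    (hV : ∀ j j', ∑ k, (starRingEnd ℂ) (V k j) * V k j' = if j = j' then 1 else 0)
    (x : Fin n → ℂ) (hx : ∀ j, x j ≠ 0)
    (y : Fin n → ℂ) (hy : ∀ k, y k = ∑ j, V k j * x j) (hy0 : ∀ k, y k ≠ 0)
    {p : ℝ} (hp : p ∈ Set.Ioo (1:ℝ) 2) :
    (∑ k, ‖y k‖ ^ (p/(p-1))) ^ ((p-1)/p) ≤ c ^ (2/p - 1) * (∑ j, ‖x j‖ ^ p) ^ (1/p) := by
  obtain ⟨hp1, hp2⟩ := hp
  have hp0 : (0:ℝ) < p := by linarith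
  have hp10 : (0:ℝ) < p - 1 := by linarith
  set q : ℝ := p / (p - 1) with hqdef
  have hq0 : 0 < q := by positivity
  set a : Fin n → ℝ := fun j => ‖x j‖ with hadef
  set b : Fin n → ℝ := fun k => ‖y k‖ with hbdef
  have ha : ∀ j, 0 < a j := fun j => norm_pos_iff.2 (hx j)
  have hb : ∀ k, 0 < b k := fun k => norm_pos_iff.2 (hy0 k)
  set s : Fin n → ℝ := fun k => b k ^ (q - 1) with hsdef
  have hs : ∀ k, 0 < s k := fun k => Real.rpow_pos_of_pos (hb k) _
  set d : Fin n → ℂ := fun k => (starRingEnd ℂ) (y k) * ((b k ^ (q - 2) : ℝ) : ℂ) with hddef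
  have hdnorm : ∀ k, ‖d k‖ = s k := by
    intro k
    rw [hddef]
    simp only [norm_mul, Complex.norm_conj, Complex.norm_real, Real.norm_eq_abs]
    rw [_root_.abs_of_nonneg (Real.rpow_nonneg (hb k).le _)]
    rw [show ‖y k‖ = b k from rfl, hsdef]
    nth_rewrite 1 [show b k = b k ^ (1:ℝ) from (Real.rpow_one _).symm]
    rw [← Real.rpow_add (hb k)]
    ring_nf
  set A : ℝ := ∑ j, a j ^ p with hAdef
  set S : ℝ := ∑ k, s k ^ p with hSdef
  set B : ℝ := ∑ k, b k ^ q with hBdef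
  have hApos : 0 < A := Finset.sum_pos (fun j _ => Real.rpow_pos_of_pos (ha j) _)
    (univ_nonempty_iff.2 ⟨⟨0, hn⟩⟩)
  have hBpos : 0 < B := Finset.sum_pos (fun k _ => Real.rpow_pos_of_pos (hb k) _)
    (univ_nonempty_iff.2 ⟨⟨0, hn⟩⟩)
  have hSB : S = B := by
    refine Finset.sum_congr rfl fun k _ => ?_
    show (b k ^ (q-1)) ^ p = b k ^ q
    rw [← Real.rpow_mul (hb k).le]
    congr 1
    rw [hqdef]; field_simp; ring
  -- the three-lines function
  set e : ℂ → ℂ := fun z => (p:ℂ) * (1 - z/2) with hedef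
  set u : ℂ → ℝ := fun z => p * (1 - z.re/2) with hudef
  have hre : ∀ (z : ℂ) (t : ℝ), (e z * (t:ℂ)).re = u z * t := by
    intro z t
    rw [hedef, hudef]
    simp [Complex.mul_re, Complex.mul_im, Complex.sub_re, Complex.div_re]
    try ring
  set G : Fin n → ℂ → ℂ := fun j z => (x j / ((a j : ℝ) : ℂ)) * Complex.exp (e z * ((Real.log (a j) : ℝ) : ℂ)) with hGdef
  set D : Fin n → ℂ → ℂ := fun k z => (d k / ((s k : ℝ) : ℂ)) * Complex.exp (e z * ((Real.log (s k) : ℝ) : ℂ)) with hDdef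
  set f : ℂ → ℂ := fun z => ∑ k, D k z * ∑ j, V k j * G j z with hfdef
  have hGnorm : ∀ j z, ‖G j z‖ = a j ^ (u z) := by
    intro j z
    rw [hGdef]
    rw [norm_mul, norm_div, Complex.norm_real, Real.norm_eq_abs,
      _root_.abs_of_nonneg (ha j).le, show ‖x j‖ = a j from rfl, div_self (ha j).ne',
      one_mul, Complex.norm_exp, hre,
      Real.rpow_def_of_pos (ha j), mul_comm]
  have hDnorm : ∀ k z, ‖D k z‖ = s k ^ (u z) := by
    intro k z
    rw [hDdef]
    rw [norm_mul, norm_div, Complex.norm_real, Real.norm_eq_abs,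
      _root_.abs_of_nonneg (hs k).le, hdnorm k, div_self (hs k).ne',
      one_mul, Complex.norm_exp, hre,
      Real.rpow_def_of_pos (hs k), mul_comm]
  have hediff : Differentiable ℂ e := by
    rw [hedef]; fun_prop
  have hfdiff : Differentiable ℂ f := by
    rw [hfdef]
    apply Differentiable.fun_sum
    intro k _
    apply Differentiable.mul
    · rw [hDdef]
      exact (differentiable_const _).mul ((hediff.mul_const _).cexp)
    · apply Differentiable.fun_sum
      intro j _
      rw [hGdef]
      exact (differentiable_const _).mul
        ((differentiable_const _).mul ((hediff.mul_const _).cexp))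
  have huIcc : ∀ z : ℂ, z ∈ Complex.HadamardThreeLines.verticalClosedStrip 0 1 →
      p/2 ≤ u z ∧ u z ≤ p := by
    intro z hz
    obtain ⟨hz0, hz1⟩ : (0:ℝ) ≤ z.re ∧ z.re ≤ 1 := hz
    rw [hudef]
    constructor <;> nlinarith
  have hrbnd : ∀ (r : ℝ), 0 < r → ∀ z : ℂ,
      z ∈ Complex.HadamardThreeLines.verticalClosedStrip 0 1 →
      r ^ (u z) ≤ Real.exp (2 * |Real.log r|) := by
    intro r hr z hz
    obtain ⟨hu1, hu2⟩ := huIcc z hz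
    rw [Real.rpow_def_of_pos hr]
    apply Real.exp_le_exp.2
    calc Real.log r * u z ≤ |Real.log r * u z| := le_abs_self _
      _ = |Real.log r| * |u z| := abs_mul _ _
      _ ≤ |Real.log r| * 2 := by
          apply mul_le_mul_of_nonneg_left _ (abs_nonneg _)
          rw [_root_.abs_of_nonneg (by nlinarith : (0:ℝ) ≤ u z)]; linarith
      _ = 2 * |Real.log r| := mul_comm _ _
  have hnorm_f_le : ∀ z : ℂ, ∀ (w : Fin n → ℝ),
      (∀ k, ‖∑ j, V k j * G j z‖ ≤ w k) →
      ‖f z‖ ≤ ∑ k, ‖D k z‖ * w k := by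
    intro z w hw
    rw [hfdef]
    refine (norm_sum_le _ _).trans (Finset.sum_le_sum fun k _ => ?_)
    rw [norm_mul]
    exact mul_le_mul_of_nonneg_left (hw k) (norm_nonneg _)
  -- boundedness on the strip
  have hBdd : BddAbove ((norm ∘ f) '' (Complex.HadamardThreeLines.verticalClosedStrip 0 1)) := by
    refine ⟨∑ k, Real.exp (2*|Real.log (s k)|) * ∑ j, c * Real.exp (2*|Real.log (a j)|), ?_⟩
    rintro w ⟨z, hz, rfl⟩
    refine (hnorm_f_le z (fun k => ∑ j, ‖V k j * G j z‖) (fun k => norm_sum_le _ _)).trans ?_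
    refine Finset.sum_le_sum fun k _ => mul_le_mul ?_ ?_ ?_ (Real.exp_pos _).le
    · rw [hDnorm k z]; exact hrbnd _ (hs k) z hz
    · refine Finset.sum_le_sum fun j _ => ?_
      rw [norm_mul, hGnorm j z]
      exact mul_le_mul (hVc k j) (hrbnd _ (ha j) z hz) (Real.rpow_nonneg (ha j).le _) hc.le
    · exact Finset.sum_nonneg fun j _ => norm_nonneg _
  -- edge bounds
  have h0 : ∀ z ∈ Complex.re ⁻¹' {0}, ‖f z‖ ≤ c * A * S := by
    intro z hz
    have hz0 : z.re = 0 := hz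
    have huz : u z = p := by simp only [hudef]; rw [hz0]; ring
    refine (hnorm_f_le z (fun k => ∑ j, ‖V k j * G j z‖) (fun k => norm_sum_le _ _)).trans ?_
    have hin : ∀ k, ∑ j, ‖V k j * G j z‖ ≤ c * A := by
      intro k
      rw [hAdef, Finset.mul_sum]
      refine Finset.sum_le_sum fun j _ => ?_
      rw [norm_mul, hGnorm j z, huz]
      exact mul_le_mul_of_nonneg_right (hVc k j) (Real.rpow_nonneg (ha j).le _)
    calc ∑ k, ‖D k z‖ * ∑ j, ‖V k j * G j z‖
        ≤ ∑ k, ‖D k z‖ * (c * A) := Finset.sum_le_sum fun k _ =>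
          mul_le_mul_of_nonneg_left (hin k) (norm_nonneg _)
      _ = c * A * S := by
          simp only [hSdef, Finset.mul_sum]
          refine Finset.sum_congr rfl fun k _ => ?_
          rw [hDnorm k z, huz]
          ring
  have hsq : ∀ r : ℝ, 0 < r → (r ^ (p/2)) ^ 2 = r ^ p := by
    intro r hr
    rw [← Real.rpow_natCast (r ^ (p/2)) 2, ← Real.rpow_mul hr.le]
    norm_num
  have h1 : ∀ z ∈ Complex.re ⁻¹' {1}, ‖f z‖ ≤ Real.sqrt S * Real.sqrt A := by
    intro z hz
    have hz1 : z.re = 1 := hz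
    have huz : u z = p/2 := by simp only [hudef]; rw [hz1]; ring
    refine (hnorm_f_le z (fun k => ‖∑ j, V k j * G j z‖) (fun k => le_refl _)).trans ?_
    calc ∑ k, ‖D k z‖ * ‖∑ j, V k j * G j z‖
        ≤ Real.sqrt (∑ k, ‖D k z‖ ^ 2) * Real.sqrt (∑ k, ‖∑ j, V k j * G j z‖ ^ 2) :=
          Real.sum_mul_le_sqrt_mul_sqrt _ _ _
      _ = Real.sqrt S * Real.sqrt A := by
          rw [MUunitary_l2 V hV (fun j => G j z)]
          congr 1
          · congr 1
            rw [hSdef]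
            refine Finset.sum_congr rfl fun k _ => ?_
            rw [hDnorm k z, huz, hsq _ (hs k)]
          · congr 1
            rw [hAdef]
            refine Finset.sum_congr rfl fun j _ => ?_
            rw [hGnorm j z, huz, hsq _ (ha j)]
  -- apply Hadamard three lines
  set θ : ℝ := 2 - 2/p with hθdef
  have hθ0 : 0 ≤ θ := by
    rw [hθdef]
    have : 2/p ≤ 2 := by rw [div_le_iff₀ hp0]; nlinarith
    linarith
  have hθ1 : θ ≤ 1 := by
    rw [hθdef]
    have : 1 ≤ 2/p := by rw [le_div_iff₀ hp0]; linarith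
    linarith
  have hθmem : ((θ:ℝ):ℂ) ∈ Complex.HadamardThreeLines.verticalClosedStrip 0 1 := by
    show ((θ:ℝ):ℂ).re ∈ Set.Icc (0:ℝ) 1
    rw [Complex.ofReal_re]
    exact ⟨hθ0, hθ1⟩
  have key3 := Complex.HadamardThreeLines.norm_le_interp_of_mem_verticalClosedStrip' zero_lt_one
    hθmem (hfdiff.diffContOnCl) hBdd h0 h1
  rw [Complex.ofReal_re] at key3
  simp only [sub_zero, div_one] at key3
  -- compute f θ
  have heθ : e ((θ:ℝ):ℂ) = 1 := by
    simp only [hedef, hθdef]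
    have hpc : (p:ℂ) ≠ 0 := Complex.ofReal_ne_zero.2 hp0.ne'
    push_cast
    field_simp
    try ring
    try tauto
  have hfθ : f ((θ:ℝ):ℂ) = ((B:ℝ):ℂ) := by
    rw [hfdef]
    have hGθ : ∀ j, G j ((θ:ℝ):ℂ) = x j := by
      intro j
      simp only [hGdef]
      rw [heθ, one_mul, ← Complex.ofReal_exp, Real.exp_log (ha j),
        div_mul_cancel₀ _ (Complex.ofReal_ne_zero.2 (ha j).ne')]
    have hDθ : ∀ k, D k ((θ:ℝ):ℂ) = d k := by
      intro k
      simp only [hDdef]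
      rw [heθ, one_mul, ← Complex.ofReal_exp, Real.exp_log (hs k),
        div_mul_cancel₀ _ (Complex.ofReal_ne_zero.2 (hs k).ne')]
    simp_rw [hGθ, hDθ]
    have : ∀ k, d k * ∑ j, V k j * x j = ((b k ^ q : ℝ) : ℂ) := by
      intro k
      rw [← hy k]
      simp only [hddef]
      have : (starRingEnd ℂ) (y k) * ((b k ^ (q-2) : ℝ):ℂ) * y k
          = (y k * (starRingEnd ℂ) (y k)) * ((b k ^ (q-2) : ℝ):ℂ) := by ring
      rw [this, Complex.mul_conj]
      rw [show Complex.normSq (y k) = ((b k ^ (2:ℕ) : ℝ)) by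
        rw [Complex.normSq_eq_norm_sq]]
      rw [← Complex.ofReal_mul]
      congr 1
      rw [← Real.rpow_natCast (b k) 2, ← Real.rpow_add (hb k)]
      norm_num
    simp_rw [this]
    rw [← Complex.ofReal_sum]
  rw [hfθ, Complex.norm_real, Real.norm_eq_abs, _root_.abs_of_pos hBpos] at key3
  -- final algebra
  have hSpos : 0 < S := hSB ▸ hBpos
  have hkey : B ≤ (c ^ (2/p - 1) * A ^ (1/p)) * B ^ ((1:ℝ)/p) := by
    have h1θ : 1 - θ = 2/p - 1 := by rw [hθdef]; ring
    calc B ≤ (c * A * S) ^ (1 - θ) * (Real.sqrt S * Real.sqrt A) ^ θ := key3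
      _ = c ^ (2/p-1) * A ^ (1/p) * B ^ ((1:ℝ)/p) := by
          rw [Real.sqrt_eq_rpow S, Real.sqrt_eq_rpow A]
          rw [Real.mul_rpow (mul_nonneg hc.le hApos.le) hSpos.le,
            Real.mul_rpow hc.le hApos.le,
            Real.mul_rpow (Real.rpow_nonneg hSpos.le _) (Real.rpow_nonneg hApos.le _),
            ← Real.rpow_mul hSpos.le, ← Real.rpow_mul hApos.le]
          rw [hSB]
          rw [show c ^ (1-θ) * A ^ (1-θ) * B ^ (1-θ) * (B ^ ((1:ℝ)/2*θ) * A ^ ((1:ℝ)/2*θ))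
              = c ^ (1-θ) * (A ^ (1-θ) * A ^ ((1:ℝ)/2*θ)) * (B ^ (1-θ) * B ^ ((1:ℝ)/2*θ)) by ring]
          rw [← Real.rpow_add hApos, ← Real.rpow_add hBpos, h1θ]
          rw [show 2/p - 1 + (1:ℝ)/2*θ = 1/p by rw [hθdef]; field_simp; ring]
  have hBp : (0:ℝ) < B ^ ((1:ℝ)/p) := Real.rpow_pos_of_pos hBpos _
  rw [show (p-1)/p = 1 - 1/p by field_simp]
  rw [Real.rpow_sub hBpos, Real.rpow_one, div_le_iff₀ hBp]
  exact hkey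

lemma MUentropy_core {n : ℕ} (hn : 0 < n) (a b : Fin n → ℝ) (ha : ∀ j, 0 < a j)
    (hb : ∀ k, 0 < b k) (ha2 : ∑ j, a j ^ 2 = 1) (hb2 : ∑ k, b k ^ 2 = 1)
    {c : ℝ} (hc : 0 < c)
    (key : ∀ p ∈ Set.Ioo (1:ℝ) 2,
      (∑ k, b k ^ (p/(p-1))) ^ ((p-1)/p) ≤ c ^ (2/p - 1) * (∑ j, a j ^ p) ^ (1/p)) :
    ∑ j, a j ^ 2 * Real.log (a j) + ∑ k, b k ^ 2 * Real.log (b k) ≤ Real.log c := by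
  have hne : (univ : Finset (Fin n)).Nonempty := univ_nonempty_iff.2 ⟨⟨0, hn⟩⟩
  set A : ℝ → ℝ := fun t => ∑ j, a j ^ t with hAdef
  set B : ℝ → ℝ := fun t => ∑ k, b k ^ t with hBdef
  have hApos : ∀ t, 0 < A t := fun t => Finset.sum_pos (fun j _ => Real.rpow_pos_of_pos (ha j) _) hne
  have hBpos : ∀ t, 0 < B t := fun t => Finset.sum_pos (fun k _ => Real.rpow_pos_of_pos (hb k) _) hne
  have hA2 : A 2 = 1 := by
    rw [hAdef]; simp only [Real.rpow_two]; exact ha2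
  have hB2 : B 2 = 1 := by
    rw [hBdef]; simp only [Real.rpow_two]; exact hb2
  set F : ℝ → ℝ := fun p =>
    (2/p - 1) * Real.log c + (1/p) * Real.log (A p) - ((p-1)/p) * Real.log (B (p/(p-1)))
    with hFdef
  set Ea : ℝ := ∑ j, a j ^ 2 * Real.log (a j) with hEadef
  set Eb : ℝ := ∑ k, b k ^ 2 * Real.log (b k) with hEbdef
  -- F is nonneg on (1,2)
  have hF0 : ∀ p ∈ Set.Ioo (1:ℝ) 2, 0 ≤ F p := by
    intro p hp
    obtain ⟨hp1, hp2⟩ := hp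
    have hkey := key p ⟨hp1, hp2⟩
    have hlog := Real.log_le_log (Real.rpow_pos_of_pos (hBpos (p/(p-1))) _) hkey
    rw [Real.log_rpow (hBpos _), Real.log_mul (Real.rpow_pos_of_pos hc _).ne'
      (Real.rpow_pos_of_pos (hApos p) _).ne', Real.log_rpow hc, Real.log_rpow (hApos p)] at hlog
    rw [hFdef]
    dsimp only
    linarith
  have hF2 : F 2 = 0 := by
    rw [hFdef]
    dsimp only
    norm_num [hA2, hB2]
  -- derivative of F at 2
  have hAd : HasDerivAt A Ea 2 := by
    rw [hAdef, hEadef]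
    refine HasDerivAt.fun_sum fun j _ => ?_
    have := (Real.hasStrictDerivAt_const_rpow (ha j) 2).hasDerivAt
    rwa [Real.rpow_two] at this
  have hBd : HasDerivAt B Eb 2 := by
    rw [hBdef, hEbdef]
    refine HasDerivAt.fun_sum fun k _ => ?_
    have := (Real.hasStrictDerivAt_const_rpow (hb k) 2).hasDerivAt
    rwa [Real.rpow_two] at this
  have hqd : HasDerivAt (fun p : ℝ => p/(p-1)) (-1) 2 := by
    have h1 : HasDerivAt (fun p : ℝ => p - 1) 1 2 := (hasDerivAt_id 2).sub_const 1
    have := (hasDerivAt_id 2).div h1 (by norm_num)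
    refine this.congr_deriv ?_
    norm_num
  have hq2 : (2:ℝ)/(2-1) = 2 := by norm_num
  have hBcomp : HasDerivAt (fun p : ℝ => B (p/(p-1))) (Eb * (-1)) 2 := by
    have hB2' : HasDerivAt B Eb ((2:ℝ)/(2-1)) := by rwa [hq2]
    exact HasDerivAt.comp 2 hB2' hqd
  have hg1 : HasDerivAt (fun p : ℝ => (2/p - 1) * Real.log c) (-(1/2) * Real.log c) 2 := by
    have h1 : HasDerivAt (fun p : ℝ => 2/p - 1) (-(1/2)) 2 := by
      have h := ((hasDerivAt_inv (two_ne_zero (α := ℝ))).const_mul (2:ℝ)).sub_const 1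
      simp_rw [← div_eq_mul_inv] at h
      refine h.congr_deriv ?_
      norm_num
    exact h1.mul_const _
  have hg2 : HasDerivAt (fun p : ℝ => (1/p) * Real.log (A p)) (-(1/4) * Real.log (A 2) + (1/2) * (Ea / A 2)) 2 := by
    have h1 : HasDerivAt (fun p : ℝ => 1/p) (-(1/4)) 2 := by
      have h := hasDerivAt_inv (two_ne_zero (α := ℝ))
      simp_rw [← one_div] at h
      refine h.congr_deriv ?_
      norm_num
    have h2 : HasDerivAt (fun p : ℝ => Real.log (A p)) (Ea / A 2) 2 := hAd.log (hApos 2).ne'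
    have := h1.mul h2
    refine this.congr_deriv ?_
    try norm_num
  have hg3 : HasDerivAt (fun p : ℝ => ((p-1)/p) * Real.log (B (p/(p-1))))
      ((1/4) * Real.log (B 2) + (1/2) * ((Eb * (-1)) / B 2)) 2 := by
    have h1 : HasDerivAt (fun p : ℝ => (p-1)/p) (1/4) 2 := by
      have h := ((hasDerivAt_id (2:ℝ)).sub_const 1).div (hasDerivAt_id (2:ℝ))
        (by norm_num : (2:ℝ) ≠ 0)
      refine h.congr_deriv ?_
      norm_num
    have h2 : HasDerivAt (fun p : ℝ => Real.log (B (p/(p-1)))) ((Eb * (-1)) / B 2) 2 := by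
      have := hBcomp.log ?_
      · convert this using 2
        rw [hq2]
      · rw [hq2]; exact (hBpos 2).ne'
    have := h1.mul h2
    refine this.congr_deriv ?_
    norm_num
  have hFd : HasDerivAt F (-(1/2) * Real.log c + (1/2) * Ea + (1/2) * Eb) 2 := by
    have := (hg1.add hg2).sub hg3
    rw [hFdef]
    refine this.congr_deriv ?_
    rw [hA2, hB2]
    norm_num
  -- left slopes are nonpositive, so derivative at 2 is ≤ 0
  have hder_le : -(1/2) * Real.log c + (1/2) * Ea + (1/2) * Eb ≤ 0 := by
    have h1 : HasDerivWithinAt F (-(1/2) * Real.log c + (1/2) * Ea + (1/2) * Eb) (Set.Iio 2) 2 :=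
      hFd.hasDerivWithinAt
    rw [hasDerivWithinAt_iff_tendsto_slope' (by simp : (2:ℝ) ∉ Set.Iio 2)] at h1
    refine le_of_tendsto h1 ?_
    filter_upwards [Ioo_mem_nhdsLT_of_mem (⟨one_lt_two, le_refl (2:ℝ)⟩ : (2:ℝ) ∈ Set.Ioc 1 2)]
      with p hp
    rw [slope_def_field, div_eq_inv_mul]
    apply mul_nonpos_of_nonpos_of_nonneg
    · rw [inv_nonpos]; linarith [hp.2]
    · rw [hF2, sub_zero]
      exact hF0 p hp
  linarith

theorem maassen_uffink {𝕜 H : Type*} [RCLike 𝕜] [NormedAddCommGroup H]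
    [InnerProductSpace 𝕜 H] [FiniteDimensional 𝕜 H]
    {n : ℕ} (hn : 0 < n)
    (τ : OrthonormalBasis (Fin n) 𝕜 H) (ω : OrthonormalBasis (Fin n) 𝕜 H)
    (h : H) (hh : ‖h‖ = 1)
    (hhτ : ∀ j, (inner 𝕜 h (τ j) : 𝕜) ≠ 0) (hhω : ∀ k, (inner 𝕜 h (ω k) : 𝕜) ≠ 0) :
    (∑ j, ‖(inner 𝕜 h (τ j) : 𝕜)‖ ^ 2 * Real.log (1 / ‖(inner 𝕜 h (τ j) : 𝕜)‖ ^ 2)) +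
      (∑ k, ‖(inner 𝕜 h (ω k) : 𝕜)‖ ^ 2 * Real.log (1 / ‖(inner 𝕜 h (ω k) : 𝕜)‖ ^ 2)) ≥
      -2 * Real.log (⨆ j, ⨆ k, ‖(inner 𝕜 (τ j) (ω k) : 𝕜)‖) := by
  classical
  set c : ℝ := ⨆ j, ⨆ k, ‖(inner 𝕜 (τ j) (ω k) : 𝕜)‖ with hcdef
  have hle : ∀ j k, ‖(inner 𝕜 (τ j) (ω k) : 𝕜)‖ ≤ c := by
    intro j k
    refine le_trans (le_ciSup (f := fun k => ‖(inner 𝕜 (τ j) (ω k) : 𝕜)‖)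
      (Set.Finite.bddAbove (Set.finite_range _)) k) ?_
    exact le_ciSup (f := fun j => ⨆ k, ‖(inner 𝕜 (τ j) (ω k) : 𝕜)‖)
      (Set.Finite.bddAbove (Set.finite_range _)) j
  -- positivity of c
  have hτnorm : ∀ j, ((inner 𝕜 (τ j) (τ j) : 𝕜)) = 1 := by
    intro j
    rw [inner_self_eq_norm_sq_to_K, τ.orthonormal.1 j]
    norm_num
  have hc : 0 < c := by
    have h1 : (∑ k, (inner 𝕜 (τ ⟨0, hn⟩) (ω k) : 𝕜) * (inner 𝕜 (ω k) (τ ⟨0, hn⟩) : 𝕜)) = 1 := by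
      rw [ω.sum_inner_mul_inner]
      exact hτnorm _
    have h2 : ∃ k, (inner 𝕜 (τ ⟨0, hn⟩) (ω k) : 𝕜) ≠ 0 := by
      by_contra hcon
      push_neg at hcon
      rw [Finset.sum_eq_zero (fun k _ => by rw [hcon k, zero_mul])] at h1
      exact one_ne_zero h1.symm
    obtain ⟨k, hk⟩ := h2
    exact lt_of_lt_of_le (norm_pos_iff.2 hk) (hle _ k)
  set φ := MUphi 𝕜 with hφdef
  have hφ0 : ∀ z : 𝕜, φ z ≠ 0 ↔ z ≠ 0 := by
    intro z
    rw [← norm_pos_iff, ← norm_pos_iff (a := z), MUphi_norm]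
  set x : Fin n → ℂ := fun j => φ (inner 𝕜 h (τ j)) with hxdef
  set y : Fin n → ℂ := fun k => φ (inner 𝕜 h (ω k)) with hydef
  set V : Fin n → Fin n → ℂ := fun k j => φ (inner 𝕜 (τ j) (ω k)) with hVdef
  have hx0 : ∀ j, x j ≠ 0 := fun j => (hφ0 _).2 (hhτ j)
  have hy0 : ∀ k, y k ≠ 0 := fun k => (hφ0 _).2 (hhω k)
  have hVc : ∀ k j, ‖V k j‖ ≤ c := by
    intro k j
    rw [hVdef]
    rw [MUphi_norm]
    exact hle j k
  have hy : ∀ k, y k = ∑ j, V k j * x j := by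
    intro k
    rw [hydef]
    dsimp only
    rw [← τ.sum_inner_mul_inner h (ω k), map_sum]
    refine Finset.sum_congr rfl fun j _ => ?_
    rw [map_mul]
    exact mul_comm _ _
  have hV : ∀ j j', ∑ k, (starRingEnd ℂ) (V k j) * V k j' = if j = j' then 1 else 0 := by
    intro j j'
    have : ∀ k, (starRingEnd ℂ) (V k j) * V k j'
        = φ ((inner 𝕜 (τ j') (ω k) : 𝕜) * (inner 𝕜 (ω k) (τ j) : 𝕜)) := by
      intro k
      rw [hVdef]
      dsimp only
      rw [← MUphi_conj, ← map_mul]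
      congr 1
      rw [inner_conj_symm]
      exact mul_comm _ _
    simp_rw [this]
    rw [← map_sum, ω.sum_inner_mul_inner]
    rcases eq_or_ne j j' with hjj | hjj
    · subst hjj
      rw [if_pos rfl, hτnorm j, map_one]
    · rw [if_neg hjj]
      have := (orthonormal_iff_ite.1 τ.orthonormal) j' j
      rw [this, if_neg (fun hcon => hjj hcon.symm), map_zero]
  -- Parseval
  have hpar : ∀ (β : OrthonormalBasis (Fin n) 𝕜 H), ∑ j, ‖(inner 𝕜 h (β j) : 𝕜)‖ ^ 2 = 1 := by
    intro β
    have h1 := β.sum_inner_mul_inner h h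
    rw [inner_self_eq_norm_sq_to_K, hh] at h1
    have h2 : ∀ j, (inner 𝕜 h (β j) : 𝕜) * (inner 𝕜 (β j) h : 𝕜)
        = ((‖(inner 𝕜 h (β j) : 𝕜)‖ ^ 2 : ℝ) : 𝕜) := by
      intro j
      rw [← inner_conj_symm (β j) h, RCLike.mul_conj]
      push_cast
      ring
    simp_rw [h2] at h1
    rw [← RCLike.ofReal_sum] at h1
    norm_num at h1
    exact_mod_cast h1
  set a : Fin n → ℝ := fun j => ‖(inner 𝕜 h (τ j) : 𝕜)‖ with hadef
  set b : Fin n → ℝ := fun k => ‖(inner 𝕜 h (ω k) : 𝕜)‖ with hbdef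
  have ha : ∀ j, 0 < a j := fun j => norm_pos_iff.2 (hhτ j)
  have hb : ∀ k, 0 < b k := fun k => norm_pos_iff.2 (hhω k)
  have hxa : ∀ j, ‖x j‖ = a j := fun j => MUphi_norm _
  have hyb : ∀ k, ‖y k‖ = b k := fun k => MUphi_norm _
  have key : ∀ p ∈ Set.Ioo (1:ℝ) 2,
      (∑ k, b k ^ (p/(p-1))) ^ ((p-1)/p) ≤ c ^ (2/p - 1) * (∑ j, a j ^ p) ^ (1/p) := by
    intro p hp
    have := MUinterp hn V hc hVc hV x hx0 y hy hy0 hp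
    simp_rw [hxa, hyb] at this
    exact this
  have core := MUentropy_core hn a b ha hb (hpar τ) (hpar ω) hc key
  have hrw : ∀ t : ℝ, 0 < t → t ^ 2 * Real.log (1 / t ^ 2) = -2 * (t ^ 2 * Real.log t) := by
    intro t ht
    rw [one_div, Real.log_inv, Real.log_pow]
    push_cast
    ring
  calc (∑ j, ‖(inner 𝕜 h (τ j) : 𝕜)‖ ^ 2 * Real.log (1 / ‖(inner 𝕜 h (τ j) : 𝕜)‖ ^ 2)) +
      (∑ k, ‖(inner 𝕜 h (ω k) : 𝕜)‖ ^ 2 * Real.log (1 / ‖(inner 𝕜 h (ω k) : 𝕜)‖ ^ 2))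
      = (∑ j, -2 * (a j ^ 2 * Real.log (a j))) + (∑ k, -2 * (b k ^ 2 * Real.log (b k))) := by
        congr 1
        · exact Finset.sum_congr rfl fun j _ => hrw _ (ha j)
        · exact Finset.sum_congr rfl fun k _ => hrw _ (hb k)
    _ = -2 * ((∑ j, a j ^ 2 * Real.log (a j)) + (∑ k, b k ^ 2 * Real.log (b k))) := by
        rw [← Finset.mul_sum, ← Finset.mul_sum]; ring
    _ ≥ -2 * Real.log c := by
        have := core
        nlinarith
end

section
/- Product implies sum lower bound: Let {τ_j}_{j=1}^n, {ω_k}_{k=1}^m be 1-bounded Parseval frames for a finite-dimensional Hilbert space H and φ : (0,1] → (0,∞) be continuous, decreasing, and submultiplicative. Then for every unit vector h with all frame coefficients nonzero, S_{τ,φ}(h) + S_{ω,φ}(h) ≥ 2 √(φ(((1 + max_{j,k}|⟨τ_j,ω_k⟩|)²)/4)). -/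
private lemma amgm_sqrt_aux {a b x : ℝ} (ha : 0 ≤ a) (hb : 0 ≤ b)
    (hx : x ≤ a * b) : 2 * Real.sqrt x ≤ a + b := by
  have h1 : Real.sqrt x ≤ Real.sqrt a * Real.sqrt b := by
    rw [← Real.sqrt_mul ha]
    exact Real.sqrt_le_sqrt hx
  nlinarith [Real.sq_sqrt ha, Real.sq_sqrt hb, sq_nonneg (Real.sqrt a - Real.sqrt b),
    Real.sqrt_nonneg a, Real.sqrt_nonneg b]

theorem sum_entropic_uncertainty {𝕜 H : Type*} [RCLike 𝕜] [NormedAddCommGroup H]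
    [InnerProductSpace 𝕜 H] [FiniteDimensional 𝕜 H]
    {n m : ℕ} (hn : 0 < n) (hm : 0 < m)
    (τ : Fin n → H) (ω : Fin m → H)
    (hτ : ∀ x : H, ‖x‖ ^ 2 = ∑ j, ‖(inner 𝕜 x (τ j) : 𝕜)‖ ^ 2)
    (hω : ∀ x : H, ‖x‖ ^ 2 = ∑ k, ‖(inner 𝕜 x (ω k) : 𝕜)‖ ^ 2)
    (hτ1 : ∀ j, ‖τ j‖ ≤ 1) (hω1 : ∀ k, ‖ω k‖ ≤ 1)
    (φ : ℝ → ℝ)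
    (hφc : ContinuousOn φ (Set.Ioc 0 1))
    (hφpos : ∀ x ∈ Set.Ioc (0:ℝ) 1, 0 < φ x)
    (hφdec : ∀ x ∈ Set.Ioc (0:ℝ) 1, ∀ y ∈ Set.Ioc (0:ℝ) 1, x ≤ y → φ y ≤ φ x)
    (hφsub : ∀ x ∈ Set.Ioc (0:ℝ) 1, ∀ y ∈ Set.Ioc (0:ℝ) 1, φ (x * y) ≤ φ x * φ y)
    (h : H) (hh : ‖h‖ = 1)
    (hhτ : ∀ j, (inner 𝕜 h (τ j) : 𝕜) ≠ 0) (hhω : ∀ k, (inner 𝕜 h (ω k) : 𝕜) ≠ 0) :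
    (∑ j, ‖(inner 𝕜 h (τ j) : 𝕜)‖ ^ 2 * φ (‖(inner 𝕜 h (τ j) : 𝕜)‖ ^ 2)) +
      (∑ k, ‖(inner 𝕜 h (ω k) : 𝕜)‖ ^ 2 * φ (‖(inner 𝕜 h (ω k) : 𝕜)‖ ^ 2)) ≥
      2 * Real.sqrt (φ ((1 + ⨆ j, ⨆ k, ‖(inner 𝕜 (τ j) (ω k) : 𝕜)‖) ^ 2 / 4)) := by
  haveI : Nonempty (Fin n) := ⟨⟨0, hn⟩⟩
  haveI : Nonempty (Fin m) := ⟨⟨0, hm⟩⟩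
  set c : Fin n → ℝ := fun j => ‖(inner 𝕜 h (τ j) : 𝕜)‖ ^ 2 with hcdef
  set d : Fin m → ℝ := fun k => ‖(inner 𝕜 h (ω k) : 𝕜)‖ ^ 2 with hddef
  set μ : ℝ := ⨆ j, ⨆ k, ‖(inner 𝕜 (τ j) (ω k) : 𝕜)‖ with hμdef
  -- membership of coefficients in (0,1]
  have hcmem : ∀ j, c j ∈ Set.Ioc (0:ℝ) 1 := by
    intro j
    constructor
    · exact pow_pos (norm_pos_iff.mpr (hhτ j)) 2
    · have h1 : ‖(inner 𝕜 h (τ j) : 𝕜)‖ ≤ 1 := by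
        calc ‖(inner 𝕜 h (τ j) : 𝕜)‖ ≤ ‖h‖ * ‖τ j‖ := norm_inner_le_norm _ _
        _ ≤ 1 := by rw [hh]; simpa using hτ1 j
      show ‖(inner 𝕜 h (τ j) : 𝕜)‖ ^ 2 ≤ 1
      nlinarith [norm_nonneg (inner 𝕜 h (τ j) : 𝕜)]
  have hdmem : ∀ k, d k ∈ Set.Ioc (0:ℝ) 1 := by
    intro k
    constructor
    · exact pow_pos (norm_pos_iff.mpr (hhω k)) 2
    · have h1 : ‖(inner 𝕜 h (ω k) : 𝕜)‖ ≤ 1 := by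
        calc ‖(inner 𝕜 h (ω k) : 𝕜)‖ ≤ ‖h‖ * ‖ω k‖ := norm_inner_le_norm _ _
        _ ≤ 1 := by rw [hh]; simpa using hω1 k
      show ‖(inner 𝕜 h (ω k) : 𝕜)‖ ^ 2 ≤ 1
      nlinarith [norm_nonneg (inner 𝕜 h (ω k) : 𝕜)]
  -- maximizers
  obtain ⟨j₀, -, hj₀⟩ := Finset.exists_max_image Finset.univ c Finset.univ_nonempty
  obtain ⟨k₀, -, hk₀⟩ := Finset.exists_max_image Finset.univ d Finset.univ_nonempty
  have hj₀' : ∀ j, c j ≤ c j₀ := fun j => hj₀ j (Finset.mem_univ j)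
  have hk₀' : ∀ k, d k ≤ d k₀ := fun k => hk₀ k (Finset.mem_univ k)
  -- bounds on μ
  have hμle : ∀ j k, ‖(inner 𝕜 (τ j) (ω k) : 𝕜)‖ ≤ μ := by
    intro j k
    have h1 : ‖(inner 𝕜 (τ j) (ω k) : 𝕜)‖ ≤ ⨆ k, ‖(inner 𝕜 (τ j) (ω k) : 𝕜)‖ :=
      le_ciSup ((Set.finite_range fun k => ‖(inner 𝕜 (τ j) (ω k) : 𝕜)‖).bddAbove) k
    have h2 : (⨆ k, ‖(inner 𝕜 (τ j) (ω k) : 𝕜)‖) ≤ μ :=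
      le_ciSup ((Set.finite_range fun j => ⨆ k, ‖(inner 𝕜 (τ j) (ω k) : 𝕜)‖).bddAbove) j
    exact h1.trans h2
  have hμ0 : 0 ≤ μ := le_trans (norm_nonneg _) (hμle j₀ k₀)
  have hiw1 : ∀ j k, ‖(inner 𝕜 (τ j) (ω k) : 𝕜)‖ ≤ 1 := by
    intro j k
    have := norm_inner_le_norm (𝕜 := 𝕜) (τ j) (ω k)
    nlinarith [hτ1 j, hω1 k, norm_nonneg (τ j), norm_nonneg (ω k)]
  have hμ1 : μ ≤ 1 := ciSup_le fun j => ciSup_le fun k => hiw1 j k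
  -- Deutsch inequality at the maximizers
  have hdeutsch : c j₀ * d k₀ ≤ (1 + μ) ^ 2 / 4 := by
    set a : 𝕜 := inner 𝕜 h (τ j₀) with hadef
    set b : 𝕜 := inner 𝕜 h (ω k₀) with hbdef
    have ha0 : a ≠ 0 := hhτ j₀
    have hb0 : b ≠ 0 := hhω k₀
    set α : 𝕜 := (‖a‖ : 𝕜) / a with hαdef
    set β : 𝕜 := (‖b‖ : 𝕜) / b with hβdef
    have hαa : α * a = (‖a‖ : 𝕜) := div_mul_cancel₀ _ ha0
    have hβb : β * b = (‖b‖ : 𝕜) := div_mul_cancel₀ _ hb0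
    have hαn : ‖α‖ = 1 := by
      rw [hαdef, norm_div, RCLike.norm_ofReal, abs_of_nonneg (norm_nonneg a),
        div_self (norm_ne_zero_iff.mpr ha0)]
    have hβn : ‖β‖ = 1 := by
      rw [hβdef, norm_div, RCLike.norm_ofReal, abs_of_nonneg (norm_nonneg b),
        div_self (norm_ne_zero_iff.mpr hb0)]
    set u : H := α • τ j₀ + β • ω k₀ with hudef
    have hinner : (inner 𝕜 h u : 𝕜) = (‖a‖ : 𝕜) + (‖b‖ : 𝕜) := by
      rw [hudef, inner_add_right, inner_smul_right, inner_smul_right, ← hadef, ← hbdef,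
        hαa, hβb]
    have hsum_le : ‖a‖ + ‖b‖ ≤ ‖u‖ := by
      have h1 : ‖a‖ + ‖b‖ = ‖(inner 𝕜 h u : 𝕜)‖ := by
        rw [hinner]
        rw [show ((‖a‖ : 𝕜) + (‖b‖ : 𝕜)) = ((‖a‖ + ‖b‖ : ℝ) : 𝕜) by push_cast; ring]
        rw [RCLike.norm_ofReal, abs_of_nonneg (by positivity)]
      rw [h1]
      calc ‖(inner 𝕜 h u : 𝕜)‖ ≤ ‖h‖ * ‖u‖ := norm_inner_le_norm _ _
      _ = ‖u‖ := by rw [hh, one_mul]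
    have hu_sq : ‖u‖ ^ 2 ≤ 2 * (1 + μ) := by
      have hexp : ‖u‖ ^ 2 = ‖α • τ j₀‖ ^ 2 + 2 * RCLike.re (inner 𝕜 (α • τ j₀) (β • ω k₀) : 𝕜)
          + ‖β • ω k₀‖ ^ 2 := norm_add_sq (𝕜 := 𝕜) _ _
      have h1 : ‖α • τ j₀‖ ^ 2 ≤ 1 := by
        rw [norm_smul, hαn, one_mul]
        nlinarith [hτ1 j₀, norm_nonneg (τ j₀)]
      have h2 : ‖β • ω k₀‖ ^ 2 ≤ 1 := by
        rw [norm_smul, hβn, one_mul]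
        nlinarith [hω1 k₀, norm_nonneg (ω k₀)]
      have h3 : RCLike.re (inner 𝕜 (α • τ j₀) (β • ω k₀) : 𝕜) ≤ μ := by
        calc RCLike.re (inner 𝕜 (α • τ j₀) (β • ω k₀) : 𝕜)
            ≤ ‖(inner 𝕜 (α • τ j₀) (β • ω k₀) : 𝕜)‖ := RCLike.re_le_norm _
        _ = ‖(inner 𝕜 (τ j₀) (ω k₀) : 𝕜)‖ := by
            rw [inner_smul_left, inner_smul_right, norm_mul, norm_mul,
              RCLike.norm_conj, hαn, hβn, one_mul, one_mul]
        _ ≤ μ := hμle j₀ k₀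
      linarith [hexp, h1, h2, h3]
    have habs : (‖a‖ + ‖b‖) ^ 2 ≤ 2 * (1 + μ) := by
      calc (‖a‖ + ‖b‖) ^ 2 ≤ ‖u‖ ^ 2 :=
            pow_le_pow_left₀ (by positivity) hsum_le 2
      _ ≤ 2 * (1 + μ) := hu_sq
    have hab : ‖a‖ * ‖b‖ ≤ (1 + μ) / 2 := by
      nlinarith [sq_nonneg (‖a‖ - ‖b‖)]
    have hcd : c j₀ * d k₀ = (‖a‖ * ‖b‖) ^ 2 := by
      simp only [hcdef, hddef, ← hadef, ← hbdef]; ring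
    rw [hcd]
    nlinarith [norm_nonneg a, norm_nonneg b, mul_nonneg (norm_nonneg a) (norm_nonneg b)]
  -- entropy lower bounds
  have hsum1 : ∑ j, c j = 1 := by
    have := hτ h; rw [hh] at this; simpa using this.symm
  have hsum2 : ∑ k, d k = 1 := by
    have := hω h; rw [hh] at this; simpa using this.symm
  have hSτ : φ (c j₀) ≤ ∑ j, c j * φ (c j) := by
    calc φ (c j₀) = ∑ j, c j * φ (c j₀) := by
          rw [← Finset.sum_mul, hsum1, one_mul]
    _ ≤ ∑ j, c j * φ (c j) := by
        apply Finset.sum_le_sum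
        intro j _
        exact mul_le_mul_of_nonneg_left
          (hφdec (c j) (hcmem j) (c j₀) (hcmem j₀) (hj₀' j)) (hcmem j).1.le
  have hSω : φ (d k₀) ≤ ∑ k, d k * φ (d k) := by
    calc φ (d k₀) = ∑ k, d k * φ (d k₀) := by
          rw [← Finset.sum_mul, hsum2, one_mul]
    _ ≤ ∑ k, d k * φ (d k) := by
        apply Finset.sum_le_sum
        intro k _
        exact mul_le_mul_of_nonneg_left
          (hφdec (d k) (hdmem k) (d k₀) (hdmem k₀) (hk₀' k)) (hdmem k).1.le
  -- B ∈ (0,1]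
  have hBmem : (1 + μ) ^ 2 / 4 ∈ Set.Ioc (0:ℝ) 1 := by
    constructor
    · positivity
    · nlinarith
  have hcdmem : c j₀ * d k₀ ∈ Set.Ioc (0:ℝ) 1 := by
    constructor
    · exact mul_pos (hcmem j₀).1 (hdmem k₀).1
    · nlinarith [(hcmem j₀).1, (hcmem j₀).2, (hdmem k₀).1, (hdmem k₀).2]
  have hφB : φ ((1 + μ) ^ 2 / 4) ≤ (∑ j, c j * φ (c j)) * (∑ k, d k * φ (d k)) := by
    calc φ ((1 + μ) ^ 2 / 4) ≤ φ (c j₀ * d k₀) :=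
          hφdec _ hcdmem _ hBmem hdeutsch
    _ ≤ φ (c j₀) * φ (d k₀) := hφsub _ (hcmem j₀) _ (hdmem k₀)
    _ ≤ (∑ j, c j * φ (c j)) * (∑ k, d k * φ (d k)) := by
        apply mul_le_mul hSτ hSω (hφpos _ (hdmem k₀)).le
        exact le_trans (hφpos _ (hcmem j₀)).le hSτ
  -- conclude by AM-GM
  have hSτ0 : 0 ≤ ∑ j, c j * φ (c j) := le_trans (hφpos _ (hcmem j₀)).le hSτ
  have hSω0 : 0 ≤ ∑ k, d k * φ (d k) := le_trans (hφpos _ (hdmem k₀)).le hSω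
  exact amgm_sqrt_aux hSτ0 hSω0 hφB
end
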